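/- arXiv:2004.09499 — 2 statements merged into one kernel-verified Lean document; each statement's English description precedes it below -/
import Mathlib

section
/- Define linear operators $u_1, u_2, \ldots$ on the free $\mathbb{Q}[\beta]$-module spanned by all partitions by $u_i \cdot \lambda = (-\beta)^{|\overline{\lambda + e_i}| - |\lambda + e_i|} \cdot \overline{\lambda + e_i}$, where for a sequence $n = (n_1, \ldots, n_r)$, $\overline{n}$ is defined by $\overline{n}_i = \min(n_i, n_{i+1}, \ldots, n_r)$. Then these operators satisfy the Knuth relations: $u_i u_k u_j = u_k u_i u_j$ for $i \le j < k$, and $u_j u_i u_k = u_j u_k u_i$ for $i < j \le k$. -/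
/-- A partition: a finitely supported weakly decreasing sequence of natural numbers. -/
def PartitionF : Type := {f : ℕ →₀ ℕ // ∀ a b : ℕ, a ≤ b → f b ≤ f a}

/-- The size `|f| = ∑ᵢ fᵢ`. -/
def wt (f : ℕ →₀ ℕ) : ℕ := f.sum fun _ v => v

/-- `λ + e_i`: add a box in row `i`. -/
noncomputable def addBox (i : ℕ) (f : ℕ →₀ ℕ) : ℕ →₀ ℕ := f + Finsupp.single i 1

/-- `f̄`: the smallest partition containing `f` componentwise (suffix maxima,
`f̄ⱼ = max(fⱼ, f_{j+1}, …)`). -/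
noncomputable def obar (f : ℕ →₀ ℕ) : ℕ →₀ ℕ :=
  Finsupp.onFinset (Finset.range (f.support.sup id + 1))
    (fun j => (f.support.filter fun m => j ≤ m).sup f)
    (by
      intro j hj
      simp only [Finset.mem_range]
      by_contra hlt
      push_neg at hlt
      apply hj
      show (f.support.filter fun m => j ≤ m).sup f = 0
      have hempty : (f.support.filter fun m => j ≤ m) = ∅ := by
        rw [Finset.filter_eq_empty_iff]
        intro m hm
        have h1 : id m ≤ f.support.sup id := Finset.le_sup hm
        simp only [id] at h1
        omega
      rw [hempty]
      rfl)

lemma obar_anti (f : ℕ →₀ ℕ) : ∀ a b : ℕ, a ≤ b → obar f b ≤ obar f a := by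
  intro a b hab
  simp only [obar, Finsupp.onFinset_apply]
  apply Finset.sup_mono
  intro m hm
  simp only [Finset.mem_filter] at hm ⊢
  exact ⟨hm.1, le_trans hab hm.2⟩

/-- The operator `u_i` on the free `ℚ[β]`-module spanned by all partitions:
`u_i · λ = (-β)^{|overline(λ+e_i)| - |λ+e_i|} · overline(λ+e_i)`. -/
noncomputable def uop (i : ℕ) :
    (PartitionF →₀ Polynomial ℚ) →ₗ[Polynomial ℚ] (PartitionF →₀ Polynomial ℚ) :=
  Finsupp.lift (PartitionF →₀ Polynomial ℚ) (Polynomial ℚ) PartitionF fun p =>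
    ((-(Polynomial.X : Polynomial ℚ)) ^ (wt (obar (addBox i p.1)) - wt (addBox i p.1))) •
      Finsupp.single (⟨obar (addBox i p.1), obar_anti _⟩ : PartitionF) (1 : Polynomial ℚ)

section Aux

variable (f : ℕ →₀ ℕ)

lemma exists_le (v : ℕ) : ∃ m, f m ≤ v := by
  refine ⟨f.support.sup id + 1, ?_⟩
  have : f (f.support.sup id + 1) = 0 := by
    by_contra h
    have hm : (f.support.sup id + 1) ∈ f.support := Finsupp.mem_support_iff.mpr h
    have := Finset.le_sup (f := id) hm
    simp only [id] at this
    omega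
  omega

/-- Least `m` with `f m ≤ v`. -/
noncomputable def Rv (v : ℕ) : ℕ := Nat.find (exists_le f v)

lemma Rv_spec (v : ℕ) : f (Rv f v) ≤ v := Nat.find_spec (exists_le f v)

lemma Rv_min' {v m : ℕ} (h : f m ≤ v) : Rv f v ≤ m := Nat.find_min' _ h

lemma Rv_gt {v m : ℕ} (h : m < Rv f v) : v < f m := by
  have := Nat.find_min (exists_le f v) h
  omega

lemma Rv_eq_of {v t : ℕ} (h1 : f t ≤ v) (h2 : ∀ m, m < t → v < f m) : Rv f v = t := by
  rw [Rv, Nat.find_eq_iff]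
  exact ⟨h1, fun m hm => by have := h2 m hm; omega⟩

lemma le_Rv_iff (hf : ∀ a b : ℕ, a ≤ b → f b ≤ f a) {v m : ℕ} :
    Rv f v ≤ m ↔ f m ≤ v :=
  ⟨fun h => le_trans (hf _ _ h) (Rv_spec f v), Rv_min' f⟩

lemma Rv_le_self (i : ℕ) : Rv f (f i) ≤ i := Rv_min' f le_rfl

/-- Pointwise formula for `obar (addBox i f)` for a partition `f`. -/
lemma oA_apply (hf : ∀ a b : ℕ, a ≤ b → f b ≤ f a) (i j : ℕ) :
    obar (addBox i f) j = if j ≤ i then max (f j) (f i + 1) else f j := by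
  have hval : ∀ m, addBox i f m = f m + if m = i then 1 else 0 := by
    intro m
    simp [addBox, Finsupp.single_apply, eq_comm]
  have hle : ∀ m ∈ (addBox i f).support, j ≤ m →
      addBox i f m ≤ ((addBox i f).support.filter fun m => j ≤ m).sup (addBox i f) :=
    fun m hm1 hm2 => Finset.le_sup (Finset.mem_filter.mpr ⟨hm1, hm2⟩)
  simp only [obar, Finsupp.onFinset_apply]
  apply le_antisymm
  · apply Finset.sup_le
    intro m hm
    simp only [Finset.mem_filter] at hm
    have hjm : j ≤ m := hm.2
    have hfj := hf j m hjm
    split_ifs with h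
    · by_cases hmi : m = i
      · subst hmi; rw [hval]; simp
      · rw [hval]; simp only [hmi, if_neg, if_false]
        omega
    · have hmi : m ≠ i := by omega
      rw [hval]; simp only [hmi, if_false]
      omega
  · split_ifs with h
    · apply max_le
      · by_cases hj0 : f j = 0
        · omega
        · have hmem : j ∈ (addBox i f).support := by
            rw [Finsupp.mem_support_iff, hval]
            split_ifs <;> omega
          have := hle j hmem (le_refl j)
          rw [hval] at this
          split_ifs at this <;> omega
      · have hmem : i ∈ (addBox i f).support := by
          rw [Finsupp.mem_support_iff, hval]; simp
        have := hle i hmem h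
        rw [hval] at this
        rw [if_pos rfl] at this
        omega
    · by_cases hj0 : f j = 0
      · omega
      · have hmem : j ∈ (addBox i f).support := by
          rw [Finsupp.mem_support_iff, hval]
          split_ifs <;> omega
        have := hle j hmem (le_refl j)
        rw [hval] at this
        have hji : j ≠ i := by omega
        simp only [hji, if_false] at this
        omega

/-- Closed form with `Rv`. -/
lemma oA_apply' (hf : ∀ a b : ℕ, a ≤ b → f b ≤ f a) (i j : ℕ) :
    obar (addBox i f) j = if Rv f (f i) ≤ j ∧ j ≤ i then f i + 1 else f j := by
  rw [oA_apply f hf]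
  by_cases hji : j ≤ i
  · by_cases hr : Rv f (f i) ≤ j
    · have h1 : f j ≤ f i := (le_Rv_iff f hf).mp hr
      have h2 : f i ≤ f j := hf j i hji
      simp only [hji, hr, and_self, if_true, if_pos]
      omega
    · have h1 : f i < f j := Rv_gt f (by omega)
      simp only [hji, hr, false_and, if_false, if_pos, and_true]
      omega
  · simp [hji]

end Aux
section Wt

lemma wt_add (a b : ℕ →₀ ℕ) : wt (a + b) = wt a + wt b := by
  unfold wt
  exact Finsupp.sum_add_index' (fun _ => rfl) (fun _ _ _ => rfl)

lemma wt_single (i n : ℕ) : wt (Finsupp.single i n) = n := by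
  unfold wt
  exact Finsupp.sum_single_index rfl

lemma wt_addBox (i : ℕ) (f : ℕ →₀ ℕ) : wt (addBox i f) = wt f + 1 := by
  rw [addBox, wt_add, wt_single]

lemma wt_eq_sum (f : ℕ →₀ ℕ) (N : ℕ) (h : ∀ m, N ≤ m → f m = 0) :
    wt f = ∑ m ∈ Finset.range N, f m := by
  unfold wt
  apply Finsupp.sum_of_support_subset
  · intro m hm
    rw [Finsupp.mem_support_iff] at hm
    rw [Finset.mem_range]
    by_contra hc
    exact hm (h m (by omega))
  · intro _ _
    rfl

lemma wt_oA (f : ℕ →₀ ℕ) (hf : ∀ a b : ℕ, a ≤ b → f b ≤ f a) (i : ℕ) :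
    wt (obar (addBox i f)) = wt f + (i + 1 - Rv f (f i)) := by
  obtain ⟨N0, hN0⟩ : ∃ N0, ∀ m, N0 ≤ m → f m = 0 := by
    refine ⟨f.support.sup id + 1, fun m hm => ?_⟩
    by_contra h
    have hmem : m ∈ f.support := Finsupp.mem_support_iff.mpr h
    have := Finset.le_sup (f := id) hmem
    simp only [id] at this
    omega
  set N := N0 + i + 1 with hN
  have hr := Rv_le_self f i
  have h1 : wt (obar (addBox i f)) = ∑ m ∈ Finset.range N, obar (addBox i f) m := by
    apply wt_eq_sum
    intro m hm
    rw [oA_apply' f hf]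
    have : ¬ (m ≤ i) := by omega
    simp only [this, and_false, if_false]
    exact hN0 m (by omega)
  have h2 : wt f = ∑ m ∈ Finset.range N, f m :=
    wt_eq_sum f N (fun m hm => hN0 m (by omega))
  rw [h1, h2]
  have h3 : ∀ m ∈ Finset.range N, obar (addBox i f) m
      = f m + (if Rv f (f i) ≤ m ∧ m ≤ i then 1 else 0) := by
    intro m _
    rw [oA_apply' f hf]
    split_ifs with h
    · have hle : f m ≤ f i := (le_Rv_iff f hf).mp h.1
      have hge : f i ≤ f m := hf m i h.2
      omega
    · omega
  rw [Finset.sum_congr rfl h3, Finset.sum_add_distrib]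
  congr 1
  have h4 : ∀ m ∈ Finset.range N, (if Rv f (f i) ≤ m ∧ m ≤ i then 1 else 0)
      = if m ∈ Finset.Icc (Rv f (f i)) i then 1 else 0 := by
    intro m _
    simp [Finset.mem_Icc]
  rw [Finset.sum_congr rfl h4, Finset.sum_ite_mem]
  have h5 : Finset.range N ∩ Finset.Icc (Rv f (f i)) i = Finset.Icc (Rv f (f i)) i := by
    apply Finset.inter_eq_right.mpr
    intro m hm
    rw [Finset.mem_Icc] at hm
    rw [Finset.mem_range]
    omega
  rw [h5]
  simp [Nat.card_Icc]

lemma Ecount_eq (f : ℕ →₀ ℕ) (hf : ∀ a b : ℕ, a ≤ b → f b ≤ f a) (i : ℕ) :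
    wt (obar (addBox i f)) - wt (addBox i f) = i - Rv f (f i) := by
  rw [wt_oA f hf, wt_addBox]
  have := Rv_le_self f i
  omega

end Wt
section Core

variable (f : ℕ →₀ ℕ)

/-- Commuting case: if `i < k` and `f k < f i`, the operations at `i` and `k`
commute and preserve each other's data. -/
lemma comm_case (hf : ∀ a b : ℕ, a ≤ b → f b ≤ f a) (i k : ℕ) (hik : i < k) (hv : f k < f i) :
    obar (addBox i (obar (addBox k f))) = obar (addBox k (obar (addBox i f)))
    ∧ (obar (addBox k f)) i = f i
    ∧ Rv (obar (addBox k f)) ((obar (addBox k f)) i) = Rv f (f i)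
    ∧ (obar (addBox i f)) k = f k
    ∧ Rv (obar (addBox i f)) ((obar (addBox i f)) k) = Rv f (f k) := by
  have hg := obar_anti (addBox k f)
  have hh := obar_anti (addBox i f)
  have hri : Rv f (f i) ≤ i := Rv_le_self f i
  have hrk : Rv f (f k) ≤ k := Rv_le_self f k
  have hirk : i < Rv f (f k) := by
    by_contra hc
    have := (le_Rv_iff f hf).mp (by omega : Rv f (f k) ≤ i)
    omega
  have hgi : (obar (addBox k f)) i = f i := by
    rw [oA_apply' f hf k i]
    split_ifs with h <;> omega
  have hhk : (obar (addBox i f)) k = f k := by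
    rw [oA_apply' f hf i k]
    split_ifs with h <;> omega
  have hRg : Rv (obar (addBox k f)) ((obar (addBox k f)) i) = Rv f (f i) := by
    rw [hgi]
    apply Rv_eq_of
    · rw [oA_apply' f hf k (Rv f (f i))]
      have := Rv_spec f (f i)
      split_ifs with h <;> omega
    · intro m hm
      rw [oA_apply' f hf k m]
      have := Rv_gt f hm
      split_ifs with h <;> omega
  have hRh : Rv (obar (addBox i f)) ((obar (addBox i f)) k) = Rv f (f k) := by
    rw [hhk]
    apply Rv_eq_of
    · rw [oA_apply' f hf i (Rv f (f k))]
      have := Rv_spec f (f k)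
      split_ifs with h <;> omega
    · intro m hm
      rw [oA_apply' f hf i m]
      have := Rv_gt f hm
      split_ifs with h <;> omega
  refine ⟨?_, hgi, hRg, hhk, hRh⟩
  ext m
  rw [oA_apply' _ hg i m, oA_apply' _ hh k m, hRg, hRh, hgi, hhk,
    oA_apply' f hf k m, oA_apply' f hf i m]
  split_ifs <;> omega

/-- The chain case of the second Knuth relation: `i < j ≤ k`, `f i = f k`. -/
lemma chain_case (hf : ∀ a b : ℕ, a ≤ b → f b ≤ f a) (i j k : ℕ) (hij : i < j) (hjk : j ≤ k) (hv : f i = f k) :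
    obar (addBox j (obar (addBox i (obar (addBox k f)))))
      = obar (addBox j (obar (addBox k (obar (addBox i f)))))
    ∧ Rv (obar (addBox k f)) ((obar (addBox k f)) i) = Rv f (f i + 1)
    ∧ Rv (obar (addBox i (obar (addBox k f))))
        ((obar (addBox i (obar (addBox k f)))) j) = i + 1
    ∧ Rv (obar (addBox i f)) ((obar (addBox i f)) k) = i + 1
    ∧ Rv (obar (addBox k (obar (addBox i f))))
        ((obar (addBox k (obar (addBox i f)))) j) = Rv f (f i + 1) := by
  set v := f i with hvdef
  set r := Rv f (f i) with hrdef
  set s := Rv f (f i + 1) with hsdef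
  have hfr : f r ≤ v := Rv_spec f (f i)
  have hfs : f s ≤ v + 1 := Rv_spec f (f i + 1)
  have hmr : ∀ m, m < r → v < f m := fun m hm => Rv_gt f hm
  have hms : ∀ m, m < s → v + 1 < f m := fun m hm => Rv_gt f hm
  have hri : r ≤ i := Rv_le_self f i
  have hsr : s ≤ r := Rv_min' f (by omega)
  have hjv : f j = v := by
    have h1 := hf i j (by omega)
    have h2 := hf j k hjk
    omega
  have hi1v : f (i+1) = v := by
    have h1 := hf i (i+1) (by omega)
    have h2 := hf (i+1) k (by omega)
    omega
  have hRk : Rv f (f k) = r := by rw [← hv]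
  -- left chain
  have hg1 : ∀ m, (obar (addBox k f)) m = if r ≤ m ∧ m ≤ k then v + 1 else f m := by
    intro m
    rw [oA_apply' f hf k m, ← hv]
  have hg1anti := obar_anti (addBox k f)
  have hg1i : (obar (addBox k f)) i = v + 1 := by
    rw [hg1 i]
    split_ifs with h <;> omega
  have hRg1 : Rv (obar (addBox k f)) ((obar (addBox k f)) i) = s := by
    rw [hg1i]
    apply Rv_eq_of
    · rw [hg1 s]
      split_ifs with h <;> omega
    · intro m hm
      rw [hg1 m]
      have := hms m hm
      split_ifs with h <;> omega
  have hg2 : ∀ m, (obar (addBox i (obar (addBox k f)))) m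
      = if s ≤ m ∧ m ≤ i then v + 2 else if r ≤ m ∧ m ≤ k then v + 1 else f m := by
    intro m
    rw [oA_apply' _ hg1anti i m, hRg1, hg1i, hg1 m]
  have hg2anti := obar_anti (addBox i (obar (addBox k f)))
  have hg2j : (obar (addBox i (obar (addBox k f)))) j = v + 1 := by
    rw [hg2 j]
    split_ifs with h <;> omega
  have hRg2 : Rv (obar (addBox i (obar (addBox k f))))
      ((obar (addBox i (obar (addBox k f)))) j) = i + 1 := by
    rw [hg2j]
    apply Rv_eq_of
    · rw [hg2 (i+1)]
      split_ifs with h h2 <;> omega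
    · intro m hm
      rw [hg2 m]
      rcases Nat.lt_or_ge m s with hc | hc
      · have := hms m hc
        split_ifs <;> omega
      · split_ifs <;> omega
  -- right chain
  have hh1 : ∀ m, (obar (addBox i f)) m = if r ≤ m ∧ m ≤ i then v + 1 else f m := by
    intro m
    rw [oA_apply' f hf i m]
  have hh1anti := obar_anti (addBox i f)
  have hh1k : (obar (addBox i f)) k = v := by
    rw [hh1 k]
    split_ifs with h <;> omega
  have hRh1 : Rv (obar (addBox i f)) ((obar (addBox i f)) k) = i + 1 := by
    rw [hh1k]
    apply Rv_eq_of
    · rw [hh1 (i+1)]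
      split_ifs with h <;> omega
    · intro m hm
      rw [hh1 m]
      rcases Nat.lt_or_ge m r with hc | hc
      · have := hmr m hc
        split_ifs <;> omega
      · split_ifs <;> omega
  have hh2 : ∀ m, (obar (addBox k (obar (addBox i f)))) m
      = if i + 1 ≤ m ∧ m ≤ k then v + 1 else if r ≤ m ∧ m ≤ i then v + 1 else f m := by
    intro m
    rw [oA_apply' _ hh1anti k m, hRh1, hh1k, hh1 m]
  have hh2anti := obar_anti (addBox k (obar (addBox i f)))
  have hh2j : (obar (addBox k (obar (addBox i f)))) j = v + 1 := by
    rw [hh2 j]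
    split_ifs with h <;> omega
  have hRh2 : Rv (obar (addBox k (obar (addBox i f))))
      ((obar (addBox k (obar (addBox i f)))) j) = s := by
    rw [hh2j]
    apply Rv_eq_of
    · rw [hh2 s]
      split_ifs <;> omega
    · intro m hm
      rw [hh2 m]
      have := hms m hm
      split_ifs <;> omega
  refine ⟨?_, hRg1, hRg2, hRh1, hRh2⟩
  ext m
  rw [oA_apply' _ hg2anti j m, hRg2, hg2j, hg2 m,
    oA_apply' _ hh2anti j m, hRh2, hh2j, hh2 m]
  split_ifs <;> omega

end Core
section Main

/-- One step of the operator on the basis: the resulting partition. -/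
noncomputable def Pstep (i : ℕ) (p : PartitionF) : PartitionF :=
  ⟨obar (addBox i p.1), obar_anti _⟩

lemma Pstep_val (i : ℕ) (p : PartitionF) : (Pstep i p).1 = obar (addBox i p.1) := rfl

/-- One step of the operator on the basis: the exponent. -/
noncomputable def Ecnt (i : ℕ) (p : PartitionF) : ℕ :=
  wt (obar (addBox i p.1)) - wt (addBox i p.1)

lemma Ecnt_eq (i : ℕ) (p : PartitionF) : Ecnt i p = i - Rv p.1 (p.1 i) :=
  Ecount_eq p.1 p.2 i

lemma uop_single (i : ℕ) (p : PartitionF) (c : Polynomial ℚ) :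
    uop i (Finsupp.single p c)
      = Finsupp.single (Pstep i p) (c * (-(Polynomial.X : Polynomial ℚ)) ^ (Ecnt i p)) := by
  unfold uop
  erw [Finsupp.lift_apply, Finsupp.sum_single_index (by erw [zero_smul])]
  erw [smul_smul, Finsupp.smul_single, smul_eq_mul, mul_one]
  rfl

lemma coeff_merge (c a : Polynomial ℚ) (e1 e2 e3 : ℕ) :
    c * a ^ e1 * a ^ e2 * a ^ e3 = c * a ^ (e1 + e2 + e3) := by
  rw [pow_add, pow_add]
  ring

theorem uop_knuth' :
    (∀ i j k : ℕ, i ≤ j → j < k →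
      uop i ∘ₗ uop k ∘ₗ uop j = uop k ∘ₗ uop i ∘ₗ uop j) ∧
    (∀ i j k : ℕ, i < j → j ≤ k →
      uop j ∘ₗ uop i ∘ₗ uop k = uop j ∘ₗ uop k ∘ₗ uop i) := by
  constructor
  · intro i j k hij hjk
    apply Finsupp.lhom_ext
    intro p c
    have hf := p.2
    have hik : i < k := by omega
    have hgv : obar (addBox j p.1) k < obar (addBox j p.1) i := by
      rw [oA_apply' p.1 hf j k, oA_apply' p.1 hf j i]
      have h1 := hf j k (le_of_lt hjk)
      rcases Nat.lt_or_ge i (Rv p.1 (p.1 j)) with hc | hc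
      · have := Rv_gt p.1 hc
        split_ifs <;> omega
      · have h2 := hf i j hij
        split_ifs <;> omega
    obtain ⟨hO, hgi, hRg, hhk, hRh⟩ :=
      comm_case (obar (addBox j p.1)) (obar_anti _) i k hik hgv
    simp only [LinearMap.comp_apply, uop_single]
    have hP : Pstep i (Pstep k (Pstep j p)) = Pstep k (Pstep i (Pstep j p)) :=
      Subtype.ext hO
    have hE2 : Ecnt i (Pstep k (Pstep j p)) = Ecnt i (Pstep j p) := by
      rw [Ecnt_eq, Ecnt_eq]
      simp only [Pstep_val]
      rw [hRg]
    have hE3 : Ecnt k (Pstep i (Pstep j p)) = Ecnt k (Pstep j p) := by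
      rw [Ecnt_eq, Ecnt_eq]
      simp only [Pstep_val]
      rw [hRh]
    rw [hP, hE2, hE3]
    congr 1
    ring
  · intro i j k hij hjk
    apply Finsupp.lhom_ext
    intro p c
    have hf := p.2
    have hik : i < k := by omega
    simp only [LinearMap.comp_apply, uop_single]
    rcases Nat.lt_or_ge (p.1 k) (p.1 i) with hlt | hge
    · obtain ⟨hO, hgi, hRg, hhk, hRh⟩ := comm_case p.1 hf i k hik hlt
      have hP : Pstep i (Pstep k p) = Pstep k (Pstep i p) := Subtype.ext hO
      have hE2 : Ecnt i (Pstep k p) = Ecnt i p := by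
        rw [Ecnt_eq, Ecnt_eq]
        simp only [Pstep_val]
        rw [hRg]
      have hE3 : Ecnt k (Pstep i p) = Ecnt k p := by
        rw [Ecnt_eq, Ecnt_eq]
        simp only [Pstep_val]
        rw [hRh]
      rw [hP, hE2, hE3]
      congr 1
      ring
    · have hv : p.1 i = p.1 k := le_antisymm hge (hf i k (by omega))
      obtain ⟨hO, hRg1, hRg2, hRh1, hRh2⟩ := chain_case p.1 hf i j k hij hjk hv
      have hP : Pstep j (Pstep i (Pstep k p)) = Pstep j (Pstep k (Pstep i p)) :=
        Subtype.ext hO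
      have hEk : Ecnt k p = k - Rv p.1 (p.1 i) := by
        rw [Ecnt_eq, ← hv]
      have hEi : Ecnt i p = i - Rv p.1 (p.1 i) := Ecnt_eq i p
      have hE2L : Ecnt i (Pstep k p) = i - Rv p.1 (p.1 i + 1) := by
        rw [Ecnt_eq]
        simp only [Pstep_val]
        rw [hRg1]
      have hE3L : Ecnt j (Pstep i (Pstep k p)) = j - (i + 1) := by
        rw [Ecnt_eq]
        simp only [Pstep_val]
        rw [hRg2]
      have hE2R : Ecnt k (Pstep i p) = k - (i + 1) := by
        rw [Ecnt_eq]
        simp only [Pstep_val]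
        rw [hRh1]
      have hE3R : Ecnt j (Pstep k (Pstep i p)) = j - Rv p.1 (p.1 i + 1) := by
        rw [Ecnt_eq]
        simp only [Pstep_val]
        rw [hRh2]
      have hri : Rv p.1 (p.1 i) ≤ i := Rv_le_self p.1 i
      have hsr : Rv p.1 (p.1 i + 1) ≤ Rv p.1 (p.1 i) :=
        Rv_min' p.1 (by have := Rv_spec p.1 (p.1 i); omega)
      have hsum : k - Rv p.1 (p.1 i) + (i - Rv p.1 (p.1 i + 1)) + (j - (i + 1))
          = i - Rv p.1 (p.1 i) + (k - (i + 1)) + (j - Rv p.1 (p.1 i + 1)) := by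
        omega
      rw [coeff_merge, coeff_merge, hP, hEk, hEi, hE2L, hE3L, hE2R, hE3R, hsum]

end Main
/-- The operators `u_i` satisfy the Knuth relations:
`u_i u_k u_j = u_k u_i u_j` for `i ≤ j < k`, and
`u_j u_i u_k = u_j u_k u_i` for `i < j ≤ k`. -/
theorem uop_knuth :
    (∀ i j k : ℕ, i ≤ j → j < k →
      uop i ∘ₗ uop k ∘ₗ uop j = uop k ∘ₗ uop i ∘ₗ uop j) ∧
    (∀ i j k : ℕ, i < j → j ≤ k →
      uop j ∘ₗ uop i ∘ₗ uop k = uop j ∘ₗ uop k ∘ₗ uop i) := by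
  exact uop_knuth'
end

section
/- Define linear operators $v_1, v_2, \ldots$ on the free $\mathbb{Q}[\beta]$-module spanned by all partitions by: $v_i \cdot \lambda = \lambda + e_i$ if $\lambda + e_i$ is again a partition (i.e., a box can be added in row $i$), and $v_i \cdot \lambda = -\beta \cdot \lambda$ otherwise. Then the operators $v_i$ satisfy the Knuth relations: $v_i v_k v_j = v_k v_i v_j$ for $i \le j < k$, and $v_j v_i v_k = v_j v_k v_i$ for $i < j \le k$. -/
open scoped Classical

/-- The operator `v_i` on the free `ℚ[β]`-module spanned by all partitions:
`v_i · λ = λ + e_i` if `λ + e_i` is again a partition, and `v_i · λ = -β · λ` otherwise. -/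
noncomputable def vop (i : ℕ) :
    (PartitionF →₀ Polynomial ℚ) →ₗ[Polynomial ℚ] (PartitionF →₀ Polynomial ℚ) :=
  Finsupp.lift (PartitionF →₀ Polynomial ℚ) (Polynomial ℚ) PartitionF fun p =>
    if h : ∀ a b : ℕ, a ≤ b → (addBox i p.1) b ≤ (addBox i p.1) a then
      Finsupp.single (⟨addBox i p.1, h⟩ : PartitionF) (1 : Polynomial ℚ)
    else
      (-(Polynomial.X : Polynomial ℚ)) • Finsupp.single p (1 : Polynomial ℚ)

/-! ### Auxiliary material -/

lemma addBox_apply (i : ℕ) (f : ℕ →₀ ℕ) (j : ℕ) :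
    addBox i f j = f j + if i = j then 1 else 0 := by
  simp [addBox, Finsupp.single_apply]

lemma addable_iff (i : ℕ) (f : ℕ →₀ ℕ) (hf : ∀ a b : ℕ, a ≤ b → f b ≤ f a) :
    (∀ a b : ℕ, a ≤ b → (addBox i f) b ≤ (addBox i f) a) ↔ (i = 0 ∨ f i < f (i - 1)) := by
  constructor
  · intro h
    rcases Nat.eq_zero_or_pos i with hi | hi
    · exact Or.inl hi
    · right
      have h2 := h (i - 1) i (by omega)
      rw [addBox_apply, addBox_apply] at h2
      have hne : i ≠ i - 1 := by omega
      rw [if_pos rfl, if_neg hne] at h2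
      omega
  · rintro h a b hab
    rw [addBox_apply, addBox_apply]
    have h1 := hf a b hab
    rcases Nat.eq_zero_or_pos i with hi | hi
    · subst hi; split_ifs <;> omega
    · have hio : i ≠ 0 := by omega
      have h2 : f i < f (i - 1) := by tauto
      by_cases hia : i = a
      · subst hia; split_ifs <;> omega
      · by_cases hib : i = b
        · subst hib
          have h3 := hf a (i - 1) (by omega)
          split_ifs <;> omega
        · split_ifs <;> omega

/-- One step of the action on a pair (partition, scalar). -/
noncomputable def step (i : ℕ) (x : PartitionF × Polynomial ℚ) : PartitionF × Polynomial ℚ :=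
  if h : ∀ a b : ℕ, a ≤ b → (addBox i x.1.1) b ≤ (addBox i x.1.1) a then
    (⟨addBox i x.1.1, h⟩, x.2)
  else
    (x.1, -Polynomial.X * x.2)

lemma step_pos' {i : ℕ} {f : ℕ →₀ ℕ} {hf : ∀ a b : ℕ, a ≤ b → f b ≤ f a}
    {c : Polynomial ℚ} (h : i = 0 ∨ f i < f (i - 1)) :
    step i ((⟨f, hf⟩ : PartitionF), c) =
      (((⟨addBox i f, (addable_iff i f hf).2 h⟩ : PartitionF), c) : PartitionF × Polynomial ℚ) :=
  dif_pos ((addable_iff i f hf).2 h)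

lemma step_neg' {i : ℕ} {f : ℕ →₀ ℕ} {hf : ∀ a b : ℕ, a ≤ b → f b ≤ f a}
    {c : Polynomial ℚ} (h : ¬(i = 0 ∨ f i < f (i - 1))) :
    step i ((⟨f, hf⟩ : PartitionF), c) =
      (((⟨f, hf⟩ : PartitionF), -Polynomial.X * c) : PartitionF × Polynomial ℚ) :=
  dif_neg (fun hh => h ((addable_iff i f hf).1 hh))

lemma pair_eq {g1 g2 : ℕ →₀ ℕ} {h1 : ∀ a b : ℕ, a ≤ b → g1 b ≤ g1 a}
    {h2 : ∀ a b : ℕ, a ≤ b → g2 b ≤ g2 a} {c1 c2 : Polynomial ℚ}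
    (hg : g1 = g2) (hc : c1 = c2) :
    (((⟨g1, h1⟩ : PartitionF), c1) : PartitionF × Polynomial ℚ) = ((⟨g2, h2⟩ : PartitionF), c2) := by
  cases hg; cases hc; rfl

/-- Commutation for non-adjacent rows. -/
lemma step_comm (i k : ℕ) (hik : i + 1 < k) (x : PartitionF × Polynomial ℚ) :
    step i (step k x) = step k (step i x) := by
  obtain ⟨⟨f, hf⟩, c⟩ := x
  by_cases hb : k = 0 ∨ f k < f (k - 1) <;>
    by_cases ha : i = 0 ∨ f i < f (i - 1)
  · have ha' : i = 0 ∨ addBox k f i < addBox k f (i - 1) := by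
      simp only [addBox_apply, Nat.add_sub_cancel, if_true, false_or]
      first | (split_ifs <;> (try simp only [false_or]) <;> omega) | omega
    have hb' : k = 0 ∨ addBox i f k < addBox i f (k - 1) := by
      simp only [addBox_apply, Nat.add_sub_cancel, if_true, false_or]
      first | (split_ifs <;> (try simp only [false_or]) <;> omega) | omega
    simp only [step_pos' hb, step_pos' ha, step_pos' ha', step_pos' hb']
    all_goals exact pair_eq (by unfold addBox; abel) (by ring)
  · have ha' : ¬(i = 0 ∨ addBox k f i < addBox k f (i - 1)) := by
      simp only [addBox_apply, Nat.add_sub_cancel, if_true, false_or]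
      first | (split_ifs <;> (try simp only [false_or]) <;> omega) | omega
    simp only [step_pos' hb, step_neg' ha, step_neg' ha']
    all_goals exact pair_eq (by unfold addBox; abel) (by ring)
  · have hb' : ¬(k = 0 ∨ addBox i f k < addBox i f (k - 1)) := by
      simp only [addBox_apply, Nat.add_sub_cancel, if_true, false_or]
      first | (split_ifs <;> (try simp only [false_or]) <;> omega) | omega
    simp only [step_neg' hb, step_pos' ha, step_neg' hb']
    all_goals exact pair_eq (by unfold addBox; abel) (by ring)
  · simp only [step_neg' hb, step_neg' ha]
    all_goals exact pair_eq (by unfold addBox; abel) (by ring)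

/-- First adjacent relation: `v_i v_{i+1} v_i = v_{i+1} v_i v_i`. -/
lemma stepA (i : ℕ) (x : PartitionF × Polynomial ℚ) :
    step i (step (i + 1) (step i x)) = step (i + 1) (step i (step i x)) := by
  obtain ⟨⟨f, hf⟩, c⟩ := x
  have hd := hf i (i + 1) (by omega)
  by_cases ha : i = 0 ∨ f i < f (i - 1)
  · have h1 : i + 1 = 0 ∨ addBox i f (i + 1) < addBox i f (i + 1 - 1) := by
      simp only [addBox_apply, Nat.add_sub_cancel, if_true, false_or]
      first | (split_ifs <;> (try simp only [false_or]) <;> omega) | omega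
    by_cases hb : i = 0 ∨ f i + 1 < f (i - 1)
    · have h2 : i = 0 ∨ addBox (i + 1) (addBox i f) i < addBox (i + 1) (addBox i f) (i - 1) := by
        simp only [addBox_apply, Nat.add_sub_cancel, if_true, false_or]
        first | (split_ifs <;> (try simp only [false_or]) <;> omega) | omega
      have h3 : i = 0 ∨ addBox i f i < addBox i f (i - 1) := by
        simp only [addBox_apply, Nat.add_sub_cancel, if_true, false_or]
        first | (split_ifs <;> (try simp only [false_or]) <;> omega) | omega
      have h4 : i + 1 = 0 ∨
          addBox i (addBox i f) (i + 1) < addBox i (addBox i f) (i + 1 - 1) := by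
        simp only [addBox_apply, Nat.add_sub_cancel, if_true, false_or]
        first | (split_ifs <;> (try simp only [false_or]) <;> omega) | omega
      simp only [step_pos' ha, step_pos' h1, step_pos' h2, step_pos' h3, step_pos' h4]
      all_goals exact pair_eq (by unfold addBox; abel) (by ring)
    · have h2 : ¬(i = 0 ∨
          addBox (i + 1) (addBox i f) i < addBox (i + 1) (addBox i f) (i - 1)) := by
        simp only [addBox_apply, Nat.add_sub_cancel, if_true, false_or]
        first | (split_ifs <;> (try simp only [false_or]) <;> omega) | omega
      have h3 : ¬(i = 0 ∨ addBox i f i < addBox i f (i - 1)) := by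
        simp only [addBox_apply, Nat.add_sub_cancel, if_true, false_or]
        first | (split_ifs <;> (try simp only [false_or]) <;> omega) | omega
      simp only [step_pos' ha, step_pos' h1, step_neg' h2, step_neg' h3]
      all_goals exact pair_eq (by unfold addBox; abel) (by ring)
  · by_cases hc : f (i + 1) < f i
    · have hcP : i + 1 = 0 ∨ f (i + 1) < f (i + 1 - 1) := by
        right; simpa using hc
      have h1 : ¬(i = 0 ∨ addBox (i + 1) f i < addBox (i + 1) f (i - 1)) := by
        simp only [addBox_apply, Nat.add_sub_cancel, if_true, false_or]
        first | (split_ifs <;> (try simp only [false_or]) <;> omega) | omega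
      simp only [step_neg' ha, step_pos' hcP, step_neg' h1]
      all_goals exact pair_eq (by unfold addBox; abel) (by ring)
    · have hcN : ¬(i + 1 = 0 ∨ f (i + 1) < f (i + 1 - 1)) := by
        rintro (h | h)
        · omega
        · exact hc (by simpa using h)
      simp only [step_neg' ha, step_neg' hcN]
      all_goals exact pair_eq (by unfold addBox; abel) (by ring)

/-- Second adjacent relation: `v_{i+1} v_i v_{i+1} = v_{i+1} v_{i+1} v_i`. -/
lemma stepB (i : ℕ) (x : PartitionF × Polynomial ℚ) :
    step (i + 1) (step i (step (i + 1) x)) = step (i + 1) (step (i + 1) (step i x)) := by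
  obtain ⟨⟨f, hf⟩, c⟩ := x
  have hd := hf i (i + 1) (by omega)
  by_cases ha : f (i + 1) < f i
  · have haP : i + 1 = 0 ∨ f (i + 1) < f (i + 1 - 1) := by
      right; simpa using ha
    by_cases hb : i = 0 ∨ f i < f (i - 1)
    · have hb' : i = 0 ∨ addBox (i + 1) f i < addBox (i + 1) f (i - 1) := by
        simp only [addBox_apply, Nat.add_sub_cancel, if_true, false_or]
        first | (split_ifs <;> (try simp only [false_or]) <;> omega) | omega
      have h1 : i + 1 = 0 ∨ addBox i (addBox (i + 1) f) (i + 1) <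
          addBox i (addBox (i + 1) f) (i + 1 - 1) := by
        simp only [addBox_apply, Nat.add_sub_cancel, if_true, false_or]
        first | (split_ifs <;> (try simp only [false_or]) <;> omega) | omega
      have h2 : i + 1 = 0 ∨ addBox i f (i + 1) < addBox i f (i + 1 - 1) := by
        simp only [addBox_apply, Nat.add_sub_cancel, if_true, false_or]
        first | (split_ifs <;> (try simp only [false_or]) <;> omega) | omega
      have h3 : i + 1 = 0 ∨ addBox (i + 1) (addBox i f) (i + 1) <
          addBox (i + 1) (addBox i f) (i + 1 - 1) := by
        simp only [addBox_apply, Nat.add_sub_cancel, if_true, false_or]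
        first | (split_ifs <;> (try simp only [false_or]) <;> omega) | omega
      simp only [step_pos' haP, step_pos' hb, step_pos' hb', step_pos' h1, step_pos' h2,
        step_pos' h3]
      all_goals exact pair_eq (by unfold addBox; abel) (by ring)
    · have hb' : ¬(i = 0 ∨ addBox (i + 1) f i < addBox (i + 1) f (i - 1)) := by
        simp only [addBox_apply, Nat.add_sub_cancel, if_true, false_or]
        first | (split_ifs <;> (try simp only [false_or]) <;> omega) | omega
      by_cases hdd : f (i + 1) + 1 < f i
      · have h4 : i + 1 = 0 ∨ addBox (i + 1) f (i + 1) < addBox (i + 1) f (i + 1 - 1) := by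
          simp only [addBox_apply, Nat.add_sub_cancel, if_true, false_or]
          first | (split_ifs <;> (try simp only [false_or]) <;> omega) | omega
        simp only [step_pos' haP, step_neg' hb, step_neg' hb', step_pos' h4]
        all_goals exact pair_eq (by unfold addBox; abel) (by ring)
      · have h4 : ¬(i + 1 = 0 ∨
            addBox (i + 1) f (i + 1) < addBox (i + 1) f (i + 1 - 1)) := by
          simp only [addBox_apply, Nat.add_sub_cancel, if_true, false_or]
          first | (split_ifs <;> (try simp only [false_or]) <;> omega) | omega
        simp only [step_pos' haP, step_neg' hb, step_neg' hb', step_neg' h4]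
        all_goals exact pair_eq (by unfold addBox; abel) (by ring)
  · have haN : ¬(i + 1 = 0 ∨ f (i + 1) < f (i + 1 - 1)) := by
      rintro (h | h)
      · omega
      · exact ha (by simpa using h)
    by_cases hb : i = 0 ∨ f i < f (i - 1)
    · have h2 : i + 1 = 0 ∨ addBox i f (i + 1) < addBox i f (i + 1 - 1) := by
        simp only [addBox_apply, Nat.add_sub_cancel, if_true, false_or]
        first | (split_ifs <;> (try simp only [false_or]) <;> omega) | omega
      have h3 : ¬(i + 1 = 0 ∨ addBox (i + 1) (addBox i f) (i + 1) <
          addBox (i + 1) (addBox i f) (i + 1 - 1)) := by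
        simp only [addBox_apply, Nat.add_sub_cancel, if_true, false_or]
        first | (split_ifs <;> (try simp only [false_or]) <;> omega) | omega
      simp only [step_neg' haN, step_pos' hb, step_pos' h2, step_neg' h3]
      all_goals exact pair_eq (by unfold addBox; abel) (by ring)
    · simp only [step_neg' haN, step_neg' hb]
      all_goals exact pair_eq (by unfold addBox; abel) (by ring)

lemma stepRel1 (i j k : ℕ) (hij : i ≤ j) (hjk : j < k) (x : PartitionF × Polynomial ℚ) :
    step i (step k (step j x)) = step k (step i (step j x)) := by
  rcases Nat.lt_or_ge (i + 1) k with h | h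
  · exact step_comm i k h (step j x)
  · rw [show j = i by omega, show k = i + 1 by omega]
    exact stepA i x

lemma stepRel2 (i j k : ℕ) (hij : i < j) (hjk : j ≤ k) (x : PartitionF × Polynomial ℚ) :
    step j (step i (step k x)) = step j (step k (step i x)) := by
  rcases Nat.lt_or_ge (i + 1) k with h | h
  · rw [step_comm i k h x]
  · rw [show j = i + 1 by omega, show k = i + 1 by omega]
    exact stepB i x

lemma vop_single (i : ℕ) (p : PartitionF) :
    vop i (Finsupp.single p (1 : Polynomial ℚ)) =
      if h : ∀ a b : ℕ, a ≤ b → (addBox i p.1) b ≤ (addBox i p.1) a then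
        Finsupp.single (⟨addBox i p.1, h⟩ : PartitionF) (1 : Polynomial ℚ)
      else
        (-(Polynomial.X : Polynomial ℚ)) • Finsupp.single p (1 : Polynomial ℚ) := by
  unfold vop
  rw [Finsupp.lift_apply, Finsupp.sum_single_index (by simp), one_smul]
  rfl

lemma vop_step (i : ℕ) (x : PartitionF × Polynomial ℚ) :
    vop i (x.2 • Finsupp.single x.1 (1 : Polynomial ℚ)) =
      (step i x).2 • Finsupp.single (step i x).1 (1 : Polynomial ℚ) := by
  rw [map_smul, vop_single]
  by_cases h : ∀ a b : ℕ, a ≤ b → (addBox i x.1.1) b ≤ (addBox i x.1.1) a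
  · erw [dif_pos h]; unfold step; erw [dif_pos h]; rfl
  · erw [dif_neg h]; unfold step; erw [dif_neg h]
    rw [smul_smul, mul_comm]

lemma vop3_single (a b c : ℕ) (p : PartitionF) :
    vop a (vop b (vop c (Finsupp.single p (1 : Polynomial ℚ)))) =
      (step a (step b (step c (p, 1)))).2 •
        Finsupp.single (step a (step b (step c (p, 1)))).1 (1 : Polynomial ℚ) := by
  have h0 : (Finsupp.single p (1 : Polynomial ℚ)) =
      ((p, (1 : Polynomial ℚ)).2 • Finsupp.single (p, (1 : Polynomial ℚ)).1 1) :=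
    (one_smul _ _).symm
  rw [h0, vop_step, vop_step, vop_step]

/-- The operators `v_i` satisfy the Knuth relations:
`v_i v_k v_j = v_k v_i v_j` for `i ≤ j < k`, and
`v_j v_i v_k = v_j v_k v_i` for `i < j ≤ k`. -/
theorem vop_knuth :
    (∀ i j k : ℕ, i ≤ j → j < k →
      vop i ∘ₗ vop k ∘ₗ vop j = vop k ∘ₗ vop i ∘ₗ vop j) ∧
    (∀ i j k : ℕ, i < j → j ≤ k →
      vop j ∘ₗ vop i ∘ₗ vop k = vop j ∘ₗ vop k ∘ₗ vop i) := by
  constructor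
  · intro i j k hij hjk
    apply Finsupp.lhom_ext'
    intro p
    apply LinearMap.ext_ring
    simp only [LinearMap.comp_apply, Finsupp.lsingle_apply]
    rw [vop3_single, vop3_single, stepRel1 i j k hij hjk]
  · intro i j k hij hjk
    apply Finsupp.lhom_ext'
    intro p
    apply LinearMap.ext_ring
    simp only [LinearMap.comp_apply, Finsupp.lsingle_apply]
    rw [vop3_single, vop3_single, stepRel2 i j k hij hjk]
end
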